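/- Assume E(|u|²) < ∞ μ-a.e. Then the following are equivalent: (a) D(EM_u) = {f ∈ L²(μ) : ū·(P f) ∈ L²(μ)} and EM_u f = ū·(P f) μ-a.e. for every f ∈ D(EM_u) (i.e., the densely defined operator EM_u is self-adjoint); (b) u is μ-a.e. equal to a real-valued 𝒜-measurable function. -/

import Mathlib

open MeasureTheory Filter ENNReal NNReal

noncomputable section

variable {X : Type*}

/-- A set `A` in the sub-σ-algebra `m` is *admissible* for the weight `u` if
`μ A + ∫_A |u|² dμ < ∞`. -/
def Admissible (m : MeasurableSpace X) [m0 : MeasurableSpace X] (μ : Measure X)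
    (u : X → ℂ) (A : Set X) : Prop :=
  MeasurableSet[m] A ∧ μ A + ∫⁻ x in A, (‖u x‖₊ : ℝ≥0∞) ^ 2 ∂μ < ⊤

/-- `gf` is a version of `E(u·f)`, i.e. `gf` is an `m`-measurable function in `L²(μ)` with
`∫_A u·f dμ = ∫_A gf dμ` for every admissible `A`.  `f ∈ D(EM_u)` iff `f ∈ L²(μ)` and such a
`gf` exists. -/
def IsWCE (m : MeasurableSpace X) [m0 : MeasurableSpace X] (μ : Measure X)
    (u f gf : X → ℂ) : Prop :=
  StronglyMeasurable[m] gf ∧ MemLp gf 2 μ ∧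
    ∀ A : Set X, Admissible m μ u A → ∫ x in A, u x * f x ∂μ = ∫ x in A, gf x ∂μ

namespace Stmt8Aux

variable {m : MeasurableSpace X} [m0 : MeasurableSpace X] {μ : Measure X} {u : X → ℂ}

lemma adm_meas {A : Set X} (h : Admissible m μ u A) : MeasurableSet[m] A := h.1
lemma adm_fin {A : Set X} (h : Admissible m μ u A) : μ A < ⊤ :=
  lt_of_le_of_lt le_self_add h.2
lemma adm_int {A : Set X} (h : Admissible m μ u A) :
    ∫⁻ x in A, (‖u x‖₊ : ℝ≥0∞) ^ 2 ∂μ < ⊤ :=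
  lt_of_le_of_lt le_add_self h.2

lemma adm_subset (hm : m ≤ m0) {A B : Set X} (hA : Admissible m μ u A)
    (hB : MeasurableSet[m] B) (hBA : B ⊆ A) : Admissible m μ u B := by
  refine ⟨hB, lt_of_le_of_lt (add_le_add (measure_mono hBA) ?_) hA.2⟩
  exact lintegral_mono_set hBA

lemma adm_inter (hm : m ≤ m0) {A B : Set X} (hA : Admissible m μ u A)
    (hB : MeasurableSet[m] B) : Admissible m μ u (B ∩ A) :=
  adm_subset hm hA (hB.inter hA.1) Set.inter_subset_right

lemma memℒp_two_of_lintegral {f : X → ℂ} (hf : AEStronglyMeasurable f μ)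
    (h : ∫⁻ x, (‖f x‖₊ : ℝ≥0∞) ^ 2 ∂μ < ⊤) : MemLp f 2 μ := by
  refine ⟨hf, ?_⟩
  rw [eLpNorm_lt_top_iff_lintegral_rpow_enorm_lt_top (by norm_num) (by norm_num)]
  have e : ∀ y : ℝ≥0∞, y ^ ENNReal.toReal 2 = y ^ 2 := fun y => by
    rw [ENNReal.toReal_ofNat, show ((2:ℝ) = ((2:ℕ):ℝ)) by norm_num, ENNReal.rpow_natCast]
  simp_rw [e]
  exact h

lemma lintegral_two_of_memℒp {f : X → ℂ} (h : MemLp f 2 μ) :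
    ∫⁻ x, (‖f x‖₊ : ℝ≥0∞) ^ 2 ∂μ < ⊤ := by
  have := (eLpNorm_lt_top_iff_lintegral_rpow_enorm_lt_top
    (p := 2) (f := f) (μ := μ) (by norm_num) (by norm_num)).1 h.2
  have e : ∀ y : ℝ≥0∞, y ^ ENNReal.toReal 2 = y ^ 2 := fun y => by
    rw [ENNReal.toReal_ofNat, show ((2:ℝ) = ((2:ℕ):ℝ)) by norm_num, ENNReal.rpow_natCast]
  simp_rw [e] at this
  exact this

/-- exhaustion by admissible sets -/
lemma exists_exhaustion (hm : m ≤ m0) [SigmaFinite (μ.trim hm)]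
    (g : X → ℝ≥0∞) (hgm : Measurable[m] g)
    (hg : ∀ A : Set X, MeasurableSet[m] A →
      ∫⁻ x in A, (‖u x‖₊ : ℝ≥0∞) ^ 2 ∂μ = ∫⁻ x in A, g x ∂μ)
    (hgfin : ∀ᵐ x ∂μ, g x < ⊤) :
    ∃ S : ℕ → Set X, (∀ n, Admissible m μ u (S n)) ∧ ∀ᵐ x ∂μ, x ∈ ⋃ n, S n := by
  set S : ℕ → Set X := fun n =>
    spanningSets (μ.trim hm) n ∩ {x | g x ≤ n} with hS
  have hSm : ∀ n, MeasurableSet[m] (S n) := fun n =>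
    (measurableSet_spanningSets (μ.trim hm) n).inter (hgm measurableSet_Iic)
  refine ⟨S, fun n => ⟨hSm n, ?_⟩, ?_⟩
  · have hfin : μ (S n) < ⊤ := by
      refine lt_of_le_of_lt (measure_mono Set.inter_subset_left) ?_
      rw [← trim_measurableSet_eq hm (measurableSet_spanningSets (μ.trim hm) n)]
      exact measure_spanningSets_lt_top (μ.trim hm) n
    have : ∫⁻ x in S n, (‖u x‖₊ : ℝ≥0∞) ^ 2 ∂μ ≤ n * μ (S n) := by
      rw [hg _ (hSm n)]
      calc ∫⁻ x in S n, g x ∂μ ≤ ∫⁻ _ in S n, (n : ℝ≥0∞) ∂μ :=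
            setLIntegral_mono measurable_const (fun x hx => hx.2)
        _ = n * μ (S n) := by rw [setLIntegral_const]
    exact ENNReal.add_lt_top.2 ⟨hfin, lt_of_le_of_lt this
      (ENNReal.mul_lt_top (ENNReal.natCast_lt_top n) hfin)⟩
  · filter_upwards [hgfin] with x hx
    obtain ⟨n₁, hn₁⟩ : ∃ n, x ∈ spanningSets (μ.trim hm) n := by
      have h2 : x ∈ ⋃ n, spanningSets (μ.trim hm) n :=
        (iUnion_spanningSets (μ.trim hm)).symm ▸ Set.mem_univ x
      exact Set.mem_iUnion.1 h2
    obtain ⟨n₂, hn₂⟩ := ENNReal.exists_nat_gt hx.ne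
    refine Set.mem_iUnion.2 ⟨max n₁ n₂, ⟨monotone_spanningSets _ (le_max_left _ _) hn₁, ?_⟩⟩
    exact le_trans hn₂.le (by exact_mod_cast le_max_right n₁ n₂)

/-- localization: two m-measurable functions with equal integrals on admissible sets agree a.e. -/
lemma ae_eq_of_forall_admissible (hm : m ≤ m0)
    (S : ℕ → Set X) (hS : ∀ n, Admissible m μ u (S n)) (hScover : ∀ᵐ x ∂μ, x ∈ ⋃ n, S n)
    {f₁ f₂ : X → ℂ}
    (h₁ : ∀ A : Set X, Admissible m μ u A → IntegrableOn f₁ A μ)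
    (h₂ : ∀ A : Set X, Admissible m μ u A → IntegrableOn f₂ A μ)
    (heq : ∀ A : Set X, Admissible m μ u A → ∫ x in A, f₁ x ∂μ = ∫ x in A, f₂ x ∂μ)
    (hm₁ : AEStronglyMeasurable[m] f₁ μ) (hm₂ : AEStronglyMeasurable[m] f₂ μ) :
    f₁ =ᵐ[μ] f₂ := by
  have key : ∀ n, f₁ =ᵐ[μ.restrict (S n)] f₂ := by
    intro n
    haveI : IsFiniteMeasure (μ.restrict (S n)) := by
      constructor
      rw [Measure.restrict_apply_univ]
      exact adm_fin (hS n)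
    haveI : SigmaFinite ((μ.restrict (S n)).trim hm) := inferInstance
    have hre : ∀ s : Set X, MeasurableSet[m] s →
        (μ.restrict (S n)).restrict s = μ.restrict (s ∩ S n) := fun s hs => by
      rw [Measure.restrict_restrict (hm s hs)]
    obtain ⟨g₁, hg₁m, hg₁e⟩ := hm₁
    obtain ⟨g₂, hg₂m, hg₂e⟩ := hm₂
    refine ae_eq_of_forall_setIntegral_eq_of_sigmaFinite' hm ?_ ?_ ?_
      ⟨g₁, hg₁m, ae_restrict_of_ae hg₁e⟩ ⟨g₂, hg₂m, ae_restrict_of_ae hg₂e⟩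
    · intro s hs _
      unfold IntegrableOn
      rw [hre s hs]
      exact h₁ _ (adm_inter hm (hS n) hs)
    · intro s hs _
      unfold IntegrableOn
      rw [hre s hs]
      exact h₂ _ (adm_inter hm (hS n) hs)
    · intro s hs _
      rw [show (∫ x in s, f₁ x ∂μ.restrict (S n)) = ∫ x in s ∩ S n, f₁ x ∂μ by
            rw [← hre s hs],
          show (∫ x in s, f₂ x ∂μ.restrict (S n)) = ∫ x in s ∩ S n, f₂ x ∂μ by
            rw [← hre s hs]]
      exact heq _ (adm_inter hm (hS n) hs)
  have hU : f₁ =ᵐ[μ.restrict (⋃ n, S n)] f₂ := (ae_restrict_iUnion_iff _ _).2 key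
  refine ae_of_ae_restrict_of_ae_restrict_compl (⋃ n, S n) hU ?_
  have hnull : μ ((⋃ n, S n)ᶜ) = 0 := by
    rw [Set.compl_def]
    exact ae_iff.1 hScover
  rw [Measure.restrict_eq_zero.2 hnull]
  simp [Filter.EventuallyEq, ae_zero]

lemma ofReal_sm {u' : X → ℝ} (hu'm : StronglyMeasurable[m] u') :
    StronglyMeasurable[m] (fun x => (u' x : ℂ)) :=
  Complex.continuous_ofReal.comp_stronglyMeasurable hu'm

lemma indicator_memℒp (hm : m ≤ m0) {A : Set X} (hA : Admissible m μ u A)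
    {u' : X → ℝ} (hu'm : StronglyMeasurable[m] u') (huu' : u =ᵐ[μ] fun x => (u' x : ℂ)) :
    MemLp (A.indicator (fun x => (u' x : ℂ))) 2 μ := by
  have km : StronglyMeasurable[m] (A.indicator (fun x => (u' x : ℂ))) :=
    (ofReal_sm hu'm).indicator hA.1
  refine memℒp_two_of_lintegral ((km.mono hm).aestronglyMeasurable) ?_
  have hpt : ∀ x, (‖A.indicator (fun x => (u' x : ℂ)) x‖₊ : ℝ≥0∞) ^ 2
      = A.indicator (fun x => (‖(u' x : ℂ)‖₊ : ℝ≥0∞) ^ 2) x := by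
    intro x
    by_cases hx : x ∈ A <;> simp [hx]
  simp_rw [hpt]
  rw [lintegral_indicator (hm _ hA.1)]
  have : ∫⁻ x in A, (‖(u' x : ℂ)‖₊ : ℝ≥0∞) ^ 2 ∂μ = ∫⁻ x in A, (‖u x‖₊ : ℝ≥0∞) ^ 2 ∂μ := by
    refine lintegral_congr_ae ?_
    filter_upwards [ae_restrict_of_ae huu'] with x hx
    rw [hx]
  rw [this]
  exact adm_int hA

lemma inner_eq_setIntegral (hm : m ≤ m0) {A : Set X} (hA : Admissible m μ u A)
    {u' : X → ℝ} (hu'm : StronglyMeasurable[m] u') (huu' : u =ᵐ[μ] fun x => (u' x : ℂ))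
    (h : Lp ℂ 2 μ) :
    @inner ℂ _ _ ((indicator_memℒp hm hA hu'm huu').toLp _) h
      = ∫ x in A, (u' x : ℂ) * h x ∂μ := by
  rw [L2.inner_def, ← integral_indicator (hm _ hA.1)]
  refine integral_congr_ae ?_
  filter_upwards [MemLp.coeFn_toLp (indicator_memℒp hm hA hu'm huu')] with x hx
  rw [RCLike.inner_apply, hx]
  by_cases hxA : x ∈ A
  · simp [hxA, Complex.conj_ofReal, mul_comm]
  · simp [hxA]

lemma pull_out (hm : m ≤ m0) {A : Set X} (hA : Admissible m μ u A)
    {u' : X → ℝ} (hu'm : StronglyMeasurable[m] u') (huu' : u =ᵐ[μ] fun x => (u' x : ℂ))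
    (f : Lp ℂ 2 μ) :
    ∫ x in A, (u' x : ℂ) * f x ∂μ
      = ∫ x in A, (u' x : ℂ) * (((condExpL2 ℂ ℂ hm f) : Lp ℂ 2 μ) : X → ℂ) x ∂μ := by
  set φ : Lp ℂ 2 μ := (indicator_memℒp hm hA hu'm huu').toLp _ with hφ
  have hφk : ⇑φ =ᵐ[μ] A.indicator (fun x => (u' x : ℂ)) :=
    MemLp.coeFn_toLp _
  have hφmem : φ ∈ lpMeas ℂ ℂ m 2 μ := by
    refine mem_lpMeas_iff_aestronglyMeasurable.mpr ?_
    exact AEStronglyMeasurable.congr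
      (((ofReal_sm hu'm).indicator hA.1).aestronglyMeasurable) hφk.symm
  have hproj : ((condExpL2 ℂ ℂ hm φ : lpMeas ℂ ℂ m 2 μ) : Lp ℂ 2 μ) = φ := by
    rw [condExpL2]
    haveI : Fact (m ≤ m0) := ⟨hm⟩
    let ind := (⟨φ, hφmem⟩ : lpMeas ℂ ℂ m 2 μ)
    have h_coe_ind : (ind : Lp ℂ 2 μ) = φ := rfl
    have h_orth_mem := Submodule.orthogonalProjectionOnto_mem_subspace_eq_self ind
    rw [← h_coe_ind, h_orth_mem]
  have chain : @inner ℂ _ _ φ f = @inner ℂ _ _ φ ((condExpL2 ℂ ℂ hm f : lpMeas ℂ ℂ m 2 μ) : Lp ℂ 2 μ) := by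
    conv_lhs => rw [← hproj]
    exact inner_condExpL2_left_eq_right hm
  rw [inner_eq_setIntegral hm hA hu'm huu' f, inner_eq_setIntegral hm hA hu'm huu'] at chain
  exact chain

lemma memℒp_integrableOn {f : X → ℂ} (hf : MemLp f 2 μ) {A : Set X} (hA : μ A < ⊤) :
    IntegrableOn f A μ := by
  haveI : IsFiniteMeasure (μ.restrict A) := by
    constructor
    rw [Measure.restrict_apply_univ]
    exact hA
  exact (hf.restrict A).integrable (by norm_num)

lemma integrableOn_mul_condexpL2 (hm : m ≤ m0) {A : Set X} (hA : Admissible m μ u A)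
    {u' : X → ℝ} (hu'm : StronglyMeasurable[m] u') (huu' : u =ᵐ[μ] fun x => (u' x : ℂ))
    (h : Lp ℂ 2 μ) :
    IntegrableOn (fun x => (u' x : ℂ) * h x) A μ := by
  have hInt : Integrable (fun x =>
      @inner ℂ _ _ (((indicator_memℒp hm hA hu'm huu').toLp _ : Lp ℂ 2 μ) x) (h x)) μ :=
    L2.integrable_inner _ _
  have hcongr : (fun x => A.indicator (fun y => (u' y : ℂ) * h y) x) =ᵐ[μ] fun x =>
      @inner ℂ _ _ (((indicator_memℒp hm hA hu'm huu').toLp _ : Lp ℂ 2 μ) x) (h x) := by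
    filter_upwards [MemLp.coeFn_toLp (indicator_memℒp hm hA hu'm huu')] with x hx
    rw [RCLike.inner_apply, hx]
    by_cases hxA : x ∈ A
    · simp [hxA, Complex.conj_ofReal, mul_comm]
    · simp [hxA]
  exact (integrable_indicator_iff (hm _ hA.1)).1 (hInt.congr hcongr.symm)

/-- Part-2 style uniqueness: any weak conditional expectation equals `u'·(P f)` a.e. -/
lemma wce_eq (hm : m ≤ m0) [SigmaFinite (μ.trim hm)]
    (S : ℕ → Set X) (hS : ∀ n, Admissible m μ u (S n)) (hScover : ∀ᵐ x ∂μ, x ∈ ⋃ n, S n)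
    {u' : X → ℝ} (hu'm : StronglyMeasurable[m] u') (huu' : u =ᵐ[μ] fun x => (u' x : ℂ))
    (f : Lp ℂ 2 μ) {gf : X → ℂ}
    (hgf : IsWCE m μ u (⇑f) gf) :
    gf =ᵐ[μ] fun x => (u' x : ℂ) * (((condExpL2 ℂ ℂ hm f) : Lp ℂ 2 μ) : X → ℂ) x := by
  set Pf : X → ℂ := (((condExpL2 ℂ ℂ hm f) : Lp ℂ 2 μ) : X → ℂ) with hPf
  have hPm : AEStronglyMeasurable[m] Pf μ := aestronglyMeasurable_condExpL2 hm f
  refine ae_eq_of_forall_admissible hm S hS hScover ?_ ?_ ?_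
    (hgf.1.aestronglyMeasurable) ?_
  · intro A hA
    exact memℒp_integrableOn hgf.2.1 (adm_fin hA)
  · intro A hA
    exact integrableOn_mul_condexpL2 hm hA hu'm huu' _
  · intro A hA
    rw [← hgf.2.2 A hA]
    rw [show (∫ x in A, u x * f x ∂μ) = ∫ x in A, (u' x : ℂ) * f x ∂μ from
      integral_congr_ae (by
        filter_upwards [ae_restrict_of_ae huu'] with x hx
        rw [hx])]
    exact pull_out hm hA hu'm huu' f
  · refine AEStronglyMeasurable.congr
      (((ofReal_sm hu'm).mul hPm.stronglyMeasurable_mk).aestronglyMeasurable) ?_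
    filter_upwards [hPm.ae_eq_mk] with x hx
    simp [Pi.mul_apply, hx]

lemma exists_weight (hm : m ≤ m0) (hu : Measurable u)
    (T : ℕ → Set X) (hTm : ∀ n, MeasurableSet[m] (T n)) (hTadm : ∀ n, Admissible m μ u (T n))
    (hTdisj : Pairwise (Function.onFun Disjoint T)) :
    ∃ w : X → ℝ, Measurable[m] w ∧ (∀ x, 0 ≤ w x) ∧ (∀ n x, x ∈ T n → 0 < w x) ∧
      MemLp (fun x => ((w x : ℝ) : ℂ)) 2 μ ∧
      (∫⁻ x, (‖u x‖₊ : ℝ≥0∞) ^ 2 * (‖w x‖₊ : ℝ≥0∞) ^ 2 ∂μ) < ⊤ := by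
  set a : ℕ → ℝ≥0∞ := fun n => μ (T n) + ∫⁻ x in T n, (‖u x‖₊ : ℝ≥0∞) ^ 2 ∂μ with ha
  have ha_lt : ∀ n, a n < ⊤ := fun n => (hTadm n).2
  set c : ℕ → ℝ≥0∞ := fun n => 2⁻¹ ^ n * (1 + a n)⁻¹ with hc
  have hc_ne0 : ∀ n, c n ≠ 0 := by
    intro n
    refine mul_ne_zero (pow_ne_zero _ (by simp)) ?_
    rw [ENNReal.inv_ne_zero]
    exact (ENNReal.add_lt_top.2 ⟨ENNReal.one_lt_top, ha_lt n⟩).ne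
  have hc_le : ∀ n, c n ≤ 2⁻¹ ^ n := by
    intro n
    calc c n ≤ 2⁻¹ ^ n * 1 := by
          exact mul_le_mul_right (ENNReal.inv_le_one.mpr
            (le_self_add : (1:ℝ≥0∞) ≤ 1 + a n)) _
      _ = 2⁻¹ ^ n := mul_one _
  have hc_le_one : ∀ n, c n ≤ 1 := by
    intro n
    calc c n ≤ 2⁻¹ ^ n := hc_le n
      _ ≤ 1 ^ n := pow_le_pow_left' (ENNReal.inv_le_one.2 one_le_two) n
      _ = 1 := one_pow n
  have hkey : ∀ n, c n ^ 2 * a n ≤ 2⁻¹ ^ n := by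
    intro n
    have h1 : (1 + a n)⁻¹ * a n ≤ 1 := by
      calc (1 + a n)⁻¹ * a n ≤ (1 + a n)⁻¹ * (1 + a n) := mul_le_mul_right le_add_self _
        _ = 1 := ENNReal.inv_mul_cancel (by simp) (by
            exact (ENNReal.add_lt_top.2 ⟨ENNReal.one_lt_top, ha_lt n⟩).ne)
    calc c n ^ 2 * a n = c n * (2⁻¹ ^ n * ((1 + a n)⁻¹ * a n)) := by ring
      _ ≤ 1 * (2⁻¹ ^ n * 1) := by
          exact mul_le_mul' (hc_le_one n) (mul_le_mul_right h1 _)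
      _ = 2⁻¹ ^ n := by ring
  set W : X → ℝ≥0∞ := fun x => ∑' n, (T n).indicator (fun _ => c n) x with hW
  have hWm : Measurable[m] W :=
    Measurable.ennreal_tsum (fun n => measurable_const.indicator (hTm n))
  have hW_mem : ∀ i x, x ∈ T i → W x = c i := by
    intro i x hx
    simp only [hW]
    rw [tsum_eq_single i (fun j hj => by
      have hxj : x ∉ T j := fun hxj =>
        (hTdisj hj).le_bot (by exact ⟨hxj, hx⟩ : x ∈ T j ∩ T i)
      simp [hxj])]
    simp [hx]
  have hW_not : ∀ x, x ∉ (⋃ n, T n) → W x = 0 := by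
    intro x hx
    have : ∀ n, (T n).indicator (fun _ => c n) x = 0 := by
      intro n
      have : x ∉ T n := fun h => hx (Set.mem_iUnion.2 ⟨n, h⟩)
      simp [this]
    simp [hW, this]
  have hW_le_one : ∀ x, W x ≤ 1 := by
    intro x
    by_cases hx : x ∈ ⋃ n, T n
    · obtain ⟨i, hi⟩ := Set.mem_iUnion.1 hx
      rw [hW_mem i x hi]; exact hc_le_one i
    · rw [hW_not x hx]; exact zero_le_one
  have hW_ne_top : ∀ x, W x ≠ ⊤ := fun x => (lt_of_le_of_lt (hW_le_one x) ENNReal.one_lt_top).ne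
  -- the key integral bound
  have hmain : ∫⁻ x, (1 + (‖u x‖₊ : ℝ≥0∞) ^ 2) * W x ^ 2 ∂μ < ⊤ := by
    have hpt : ∀ x, (1 + (‖u x‖₊ : ℝ≥0∞) ^ 2) * W x ^ 2
        = ∑' n, (T n).indicator (fun y => c n ^ 2 * (1 + (‖u y‖₊ : ℝ≥0∞) ^ 2)) x := by
      intro x
      by_cases hx : x ∈ ⋃ n, T n
      · obtain ⟨i, hi⟩ := Set.mem_iUnion.1 hx
        rw [hW_mem i x hi]
        rw [tsum_eq_single i ?_]
        · simp [hi, mul_comm]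
        · intro j hj
          have : x ∉ T j := fun hxj =>
            (hTdisj hj).le_bot (by exact ⟨hxj, hi⟩ : x ∈ T j ∩ T i)
          simp [this]
      · rw [hW_not x hx]
        have : ∀ n, (T n).indicator (fun y => c n ^ 2 * (1 + (‖u y‖₊ : ℝ≥0∞) ^ 2)) x = 0 := by
          intro n
          have : x ∉ T n := fun h => hx (Set.mem_iUnion.2 ⟨n, h⟩)
          simp [this]
        simp [this]
    calc ∫⁻ x, (1 + (‖u x‖₊ : ℝ≥0∞) ^ 2) * W x ^ 2 ∂μ
        = ∑' n, ∫⁻ x, (T n).indicator (fun y => c n ^ 2 * (1 + (‖u y‖₊ : ℝ≥0∞) ^ 2)) x ∂μ := by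
          simp_rw [hpt]
          exact lintegral_tsum (fun n => (Measurable.indicator
            (measurable_const.mul ((measurable_const.add
              ((hu.nnnorm.coe_nnreal_ennreal).pow_const 2)))) (hm _ (hTm n))).aemeasurable)
      _ = ∑' n, c n ^ 2 * a n := by
          refine tsum_congr (fun n => ?_)
          rw [lintegral_indicator (hm _ (hTm n)), lintegral_const_mul _ (f := fun y => 1 + (‖u y‖₊ : ℝ≥0∞) ^ 2)
            (measurable_const.add ((hu.nnnorm.coe_nnreal_ennreal).pow_const 2))]
          congr 1
          rw [lintegral_add_left measurable_const, setLIntegral_const, one_mul]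
      _ ≤ ∑' n : ℕ, 2⁻¹ ^ n := ENNReal.tsum_le_tsum hkey
      _ < ⊤ := by
          rw [ENNReal.tsum_geometric]
          exact ENNReal.inv_lt_top.2 (by simp)
  set w : X → ℝ := fun x => (W x).toReal with hwdef
  have hnn : ∀ x, (‖w x‖₊ : ℝ≥0∞) = W x := by
    intro x
    rw [← enorm_eq_nnnorm, Real.enorm_eq_ofReal ENNReal.toReal_nonneg, ENNReal.ofReal_toReal (hW_ne_top x)]
  have hwm : Measurable[m] w := ENNReal.measurable_toReal.comp hWm
  have hnnC : ∀ x, (‖((w x : ℝ) : ℂ)‖₊ : ℝ≥0∞) = W x := by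
    intro x
    rw [← hnn x]
    congr 1
    exact Complex.nnnorm_real (w x)
  refine ⟨w, hwm, fun x => ENNReal.toReal_nonneg, ?_, ?_, ?_⟩
  · intro n x hx
    simp only [hwdef]
    rw [hW_mem n x hx]
    exact ENNReal.toReal_pos (hc_ne0 n) (lt_of_le_of_lt (hc_le_one n) ENNReal.one_lt_top).ne
  · refine memℒp_two_of_lintegral ?_ ?_
    · exact (Complex.continuous_ofReal.comp_stronglyMeasurable
        ((hwm.mono hm le_rfl).stronglyMeasurable)).aestronglyMeasurable
    · refine lt_of_le_of_lt ?_ hmain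
      refine lintegral_mono (fun x => ?_)
      rw [hnnC x]
      calc W x ^ 2 = 1 * W x ^ 2 := (one_mul _).symm
        _ ≤ (1 + (‖u x‖₊ : ℝ≥0∞) ^ 2) * W x ^ 2 := mul_le_mul_left le_self_add _
  · refine lt_of_le_of_lt ?_ hmain
    refine lintegral_mono (fun x => ?_)
    rw [hnn x]
    exact mul_le_mul_left le_add_self _

lemma condexpL2_of_mem (hm : m ≤ m0) {φ : Lp ℂ 2 μ} (hφ : φ ∈ lpMeas ℂ ℂ m 2 μ) :
    ((condExpL2 ℂ ℂ hm φ : lpMeas ℂ ℂ m 2 μ) : Lp ℂ 2 μ) = φ := by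
  rw [condExpL2]
  haveI : Fact (m ≤ m0) := ⟨hm⟩
  let ind := (⟨φ, hφ⟩ : lpMeas ℂ ℂ m 2 μ)
  have h_coe_ind : (ind : Lp ℂ 2 μ) = φ := rfl
  have h_orth_mem := Submodule.orthogonalProjectionOnto_mem_subspace_eq_self ind
  rw [← h_coe_ind, h_orth_mem]

lemma forward (hm : m ≤ m0) [SigmaFinite (μ.trim hm)] (hu : Measurable u)
    (S : ℕ → Set X) (hS : ∀ n, Admissible m μ u (S n)) (hScover : ∀ᵐ x ∂μ, x ∈ ⋃ n, S n)
    (H1 : ∀ f : Lp ℂ 2 μ,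
      MemLp (fun x => (starRingEnd ℂ) (u x) *
        (((condExpL2 ℂ ℂ hm f) : Lp ℂ 2 μ) : X → ℂ) x) 2 μ →
      ∃ gf : X → ℂ, IsWCE m μ u (⇑f) gf)
    (H2 : ∀ (f : Lp ℂ 2 μ) (gf : X → ℂ), IsWCE m μ u (⇑f) gf →
      gf =ᵐ[μ] fun x => (starRingEnd ℂ) (u x) *
        (((condExpL2 ℂ ℂ hm f) : Lp ℂ 2 μ) : X → ℂ) x) :
    ∃ u' : X → ℝ, StronglyMeasurable[m] u' ∧ u =ᵐ[μ] fun x => (u' x : ℂ) := by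
  set T := disjointed S with hT
  have hTm : ∀ n, MeasurableSet[m] (T n) := MeasurableSet.disjointed (fun n => (hS n).1)
  have hTadm : ∀ n, Admissible m μ u (T n) :=
    fun n => adm_subset hm (hS n) (hTm n) (disjointed_subset S n)
  have hTdisj : Pairwise (Function.onFun Disjoint T) := disjoint_disjointed S
  have hTcover : ∀ᵐ x ∂μ, x ∈ ⋃ n, T n := by
    rw [hT, iUnion_disjointed]; exact hScover
  obtain ⟨w, hwm, hwnn, hwpos, hwC, hwu⟩ := exists_weight hm hu T hTm hTadm hTdisj
  set wC : X → ℂ := fun x => ((w x : ℝ) : ℂ) with hwC'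
  set f : Lp ℂ 2 μ := hwC.toLp wC with hfdef
  have hfw : ⇑f =ᵐ[μ] wC := MemLp.coeFn_toLp hwC
  have hwsm : StronglyMeasurable[m] wC :=
    Complex.continuous_ofReal.comp_stronglyMeasurable (hwm.stronglyMeasurable)
  have hfmem : f ∈ lpMeas ℂ ℂ m 2 μ :=
    mem_lpMeas_iff_aestronglyMeasurable.mpr
      (AEStronglyMeasurable.congr hwsm.aestronglyMeasurable hfw.symm)
  have hPfw : (((condExpL2 ℂ ℂ hm f) : Lp ℂ 2 μ) : X → ℂ) =ᵐ[μ] wC := by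
    rw [condexpL2_of_mem hm hfmem]; exact hfw
  have hMem' : MemLp (fun x => (starRingEnd ℂ) (u x) * wC x) 2 μ := by
    refine memℒp_two_of_lintegral ?_ ?_
    · exact ((continuous_star.measurable.comp hu).mul
        (Complex.measurable_ofReal.comp (hwm.mono hm le_rfl))).aestronglyMeasurable
    · refine lt_of_le_of_lt (le_of_eq (lintegral_congr fun x => ?_)) hwu
      rw [nnnorm_mul, ENNReal.coe_mul, mul_pow]
      congr 2
      · rw [starRingEnd_apply, nnnorm_star]
      · rw [hwC', Complex.nnnorm_real]
  have hMem : MemLp (fun x => (starRingEnd ℂ) (u x) *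
      (((condExpL2 ℂ ℂ hm f) : Lp ℂ 2 μ) : X → ℂ) x) 2 μ := by
    refine hMem'.ae_eq ?_
    filter_upwards [hPfw] with x hx
    rw [hx]
  obtain ⟨gf, hgf⟩ := H1 f hMem
  have hg2 : gf =ᵐ[μ] fun x => (starRingEnd ℂ) (u x) * wC x := by
    refine (H2 f gf hgf).trans ?_
    filter_upwards [hPfw] with x hx
    rw [hx]
  -- gf is a.e. self-conjugate
  have hstar : (fun x => star (gf x)) =ᵐ[μ] gf := by
    have hsgm : StronglyMeasurable[m] (fun x => star (gf x)) :=
      continuous_star.comp_stronglyMeasurable hgf.1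
    have hsmem : MemLp (fun x => star (gf x)) 2 μ := by
      refine memℒp_two_of_lintegral (continuous_star.comp_aestronglyMeasurable hgf.2.1.aestronglyMeasurable) ?_
      refine lt_of_le_of_lt (le_of_eq (lintegral_congr fun x => ?_))
        (lintegral_two_of_memℒp hgf.2.1)
      rw [nnnorm_star]
    have he1 : (fun x => star (gf x)) =ᵐ[μ] fun x => u x * wC x := by
      filter_upwards [hg2] with x hx
      rw [hx, star_mul', starRingEnd_apply, star_star]
      congr 1
      rw [hwC', Complex.star_def, Complex.conj_ofReal]
    refine ae_eq_of_forall_admissible hm T hTadm hTcover ?_ ?_ ?_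
      hsgm.aestronglyMeasurable hgf.1.aestronglyMeasurable
    · intro A hA
      exact memℒp_integrableOn hsmem (adm_fin hA)
    · intro A hA
      exact memℒp_integrableOn hgf.2.1 (adm_fin hA)
    · intro A hA
      rw [integral_congr_ae (ae_restrict_of_ae he1), ← hgf.2.2 A hA]
      refine integral_congr_ae ?_
      filter_upwards [ae_restrict_of_ae hfw] with x hx
      rw [hx]
  refine ⟨fun x => (gf x).re / w x, ?_, ?_⟩
  · exact ((Complex.measurable_re.comp hgf.1.measurable).div hwm).stronglyMeasurable
  · filter_upwards [hg2, hstar, hTcover] with x h1 h2 hx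
    obtain ⟨i, hxi⟩ := Set.mem_iUnion.1 hx
    have hwp : 0 < w x := hwpos i x hxi
    have hwC0 : wC x ≠ 0 := by
      show ((w x : ℝ) : ℂ) ≠ 0
      exact_mod_cast ne_of_gt hwp
    have him : gf x = ((gf x).re : ℂ) := by
      refine (Complex.conj_eq_iff_re.1 ?_).symm
      rw [starRingEnd_apply]
      exact h2
    have hcu : (starRingEnd ℂ) (u x) = ((gf x).re : ℂ) / wC x := by
      rw [eq_div_iff hwC0, ← him]
      exact h1.symm
    have h4 := congrArg (starRingEnd ℂ) hcu
    rw [Complex.conj_conj, map_div₀, Complex.conj_ofReal] at h4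
    rw [h4, hwC']
    rw [show (starRingEnd ℂ) (((w x : ℝ) : ℂ)) = ((w x : ℝ) : ℂ) from Complex.conj_ofReal _]
    norm_cast

end Stmt8Aux

open Stmt8Aux

/-- With `E(|u|²) < ∞` a.e., `EM_u` is self-adjoint (its domain coincides with
the domain `{f : ū·(P f) ∈ L²}` of its adjoint and `EM_u f = ū·(P f)` a.e. there) iff `u` is
a.e. equal to a real-valued `m`-measurable function.  Here `P = condexpL2` is the orthogonal
projection onto the `m`-measurable elements of `L²(μ)`. -/
theorem stmt8 (m : MeasurableSpace X) [m0 : MeasurableSpace X] (hm : m ≤ m0)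
    (μ : Measure X) [SigmaFinite μ] [SigmaFinite (μ.trim hm)]
    (u : X → ℂ) (hu : Measurable u)
    (g : X → ℝ≥0∞) (hgm : Measurable[m] g)
    (hg : ∀ A : Set X, MeasurableSet[m] A →
      ∫⁻ x in A, (‖u x‖₊ : ℝ≥0∞) ^ 2 ∂μ = ∫⁻ x in A, g x ∂μ)
    (hgfin : ∀ᵐ x ∂μ, g x < ⊤) :
    ((∀ f : Lp ℂ 2 μ,
        ((∃ gf : X → ℂ, IsWCE m μ u (f : X → ℂ) gf) ↔
          MemLp (fun x => (starRingEnd ℂ) (u x) * (↑(condExpL2 ℂ ℂ hm f) : Lp ℂ 2 μ) x) 2 μ)) ∧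
      (∀ (f : Lp ℂ 2 μ) (gf : X → ℂ), IsWCE m μ u (f : X → ℂ) gf →
        gf =ᵐ[μ] fun x =>
          (starRingEnd ℂ) (u x) * (↑(condExpL2 ℂ ℂ hm f) : Lp ℂ 2 μ) x)) ↔
    (∃ u' : X → ℝ, StronglyMeasurable[m] u' ∧ u =ᵐ[μ] fun x => (u' x : ℂ)) := by
  obtain ⟨S, hS, hScover⟩ := exists_exhaustion hm g hgm hg hgfin
  constructor
  · rintro ⟨H1, H2⟩
    exact forward hm hu S hS hScover (fun f hMf => (H1 f).2 hMf) H2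
  · rintro ⟨u', hu'm, huu'⟩
    have hconj : ∀ᵐ x ∂μ, (starRingEnd ℂ) (u x) = ((u' x : ℝ) : ℂ) := by
      filter_upwards [huu'] with x hx
      rw [hx, Complex.conj_ofReal]
    have part2 : ∀ (f : Lp ℂ 2 μ) (gf : X → ℂ), IsWCE m μ u (f : X → ℂ) gf →
        gf =ᵐ[μ] fun x =>
          (starRingEnd ℂ) (u x) * (↑(condExpL2 ℂ ℂ hm f) : Lp ℂ 2 μ) x := by
      intro f gf hgf
      refine (wce_eq hm S hS hScover hu'm huu' f hgf).trans ?_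
      filter_upwards [hconj] with x hx
      rw [hx]
    refine ⟨fun f => ⟨?_, ?_⟩, part2⟩
    · rintro ⟨gf, hgf⟩
      exact hgf.2.1.ae_eq (part2 f gf hgf)
    · intro hM
      set Pf : X → ℂ := ((↑(condExpL2 ℂ ℂ hm f) : Lp ℂ 2 μ) : X → ℂ) with hPfdef
      have hPm : AEStronglyMeasurable[m] Pf μ := aestronglyMeasurable_condExpL2 hm f
      refine ⟨fun x => (u' x : ℂ) * hPm.mk Pf x, ?_, ?_, ?_⟩
      · exact (ofReal_sm hu'm).mul hPm.stronglyMeasurable_mk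
      · refine MemLp.ae_eq ?_ hM
        filter_upwards [hconj, hPm.ae_eq_mk] with x h1 h2
        rw [h1, ← h2]
      · intro A hA
        have e1 : ∫ x in A, u x * f x ∂μ = ∫ x in A, (u' x : ℂ) * f x ∂μ := by
          refine integral_congr_ae ?_
          filter_upwards [ae_restrict_of_ae huu'] with x hx
          rw [hx]
        rw [e1, pull_out hm hA hu'm huu' f]
        refine integral_congr_ae ?_
        filter_upwards [ae_restrict_of_ae hPm.ae_eq_mk] with x hx
        rw [← hx]
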